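/- arXiv:1411.5793 — 3 statements merged into one kernel-verified Lean document; each statement's English description precedes it below -/
import Mathlib

section
/- Let a and b be coprime positive integers. Then the number of integers n with 0 ≤ n ≤ ab - a - b - 1 that can be written as n = αa + βb with α, β nonnegative integers is exactly (a-1)(b-1)/2. -/
open Finset

-- existence of canonical representation
lemma canon (a b : ℕ) (hb : 0 < b) (hab : Nat.Coprime a b) (n : ℤ) :
    ∃ x y : ℤ, 0 ≤ x ∧ x < (b : ℤ) ∧ n = x * a + y * b := by
  have hc : IsCoprime (a : ℤ) (b : ℤ) := Nat.isCoprime_iff_coprime.mpr hab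
  obtain ⟨u, v, huv⟩ := hc
  have hB : (0 : ℤ) < b := by exact_mod_cast hb
  refine ⟨(n * u) % b, n * v + ((n * u) / b) * a, Int.emod_nonneg _ hB.ne',
    Int.emod_lt_of_pos _ hB, ?_⟩
  have h := Int.emod_add_mul_ediv (n * u) b
  linear_combination (-n) * huv + (-(a : ℤ)) * h

lemma uniq (a b : ℕ) (ha : 0 < a) (hb : 0 < b) (hab : Nat.Coprime a b)
    {x₁ y₁ x₂ y₂ : ℤ} (h1 : 0 ≤ x₁) (h1' : x₁ < b) (h2 : 0 ≤ x₂) (h2' : x₂ < b)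
    (he : x₁ * a + y₁ * b = x₂ * a + y₂ * b) : x₁ = x₂ ∧ y₁ = y₂ := by
  have hc : IsCoprime (b : ℤ) (a : ℤ) := (Nat.isCoprime_iff_coprime.mpr hab).symm
  have hdvd : (b : ℤ) ∣ (x₁ - x₂) * a := ⟨y₂ - y₁, by linarith⟩
  have hx : x₁ = x₂ := by
    have := hc.dvd_of_dvd_mul_right hdvd
    obtain ⟨k, hk⟩ := this
    have hB : (0 : ℤ) < b := by exact_mod_cast hb
    have hk0 : k = 0 := by nlinarith
    rw [hk0, mul_zero] at hk
    omega
  subst hx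
  constructor
  · rfl
  · have hB : (0 : ℤ) < b := by exact_mod_cast hb
    have : y₁ * b = y₂ * b := by linarith
    exact mul_right_cancel₀ hB.ne' this

lemma rep_iff (a b : ℕ) (ha : 0 < a) (hb : 0 < b) (hab : Nat.Coprime a b)
    (n : ℕ) {x y : ℤ} (hx0 : 0 ≤ x) (hxb : x < b) (h : (n : ℤ) = x * a + y * b) :
    (∃ α β : ℕ, n = α * a + β * b) ↔ 0 ≤ y := by
  constructor
  · rintro ⟨α, β, rfl⟩
    have hB : (0 : ℤ) < b := by exact_mod_cast hb
    have hr0 : (0 : ℤ) ≤ ((α % b : ℕ) : ℤ) := Int.natCast_nonneg _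
    have hrb : ((α % b : ℕ) : ℤ) < b := by exact_mod_cast Nat.mod_lt _ hb
    have he : ((α % b : ℕ) : ℤ) * a + ((β : ℤ) + (α / b : ℕ) * a) * b = x * a + y * b := by
      rw [← h]
      push_cast
      have := Nat.mod_add_div α b
      nlinarith [this]
    obtain ⟨-, hy⟩ := uniq a b ha hb hab hr0 hrb hx0 hxb he
    rw [← hy]
    positivity
  · intro hy
    refine ⟨x.toNat, y.toNat, ?_⟩
    have : ((x.toNat * a + y.toNat * b : ℕ) : ℤ) = (n : ℤ) := by
      push_cast [Int.toNat_of_nonneg hx0, Int.toNat_of_nonneg hy]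
      omega
    exact_mod_cast this.symm

lemma sym (a b : ℕ) (ha : 2 ≤ a) (hb : 2 ≤ b) (hab : Nat.Coprime a b)
    {n : ℕ} (hn : n ≤ a * b - a - b) :
    (∃ α β : ℕ, n = α * a + β * b) ↔ ¬ ∃ α β : ℕ, (a * b - a - b - n) = α * a + β * b := by
  have ha0 : 0 < a := by omega
  have hb0 : 0 < b := by omega
  have hmn : a + b ≤ a * b := Nat.add_le_mul ha hb
  have hNcast : ((a * b - a - b : ℕ) : ℤ) = (a : ℤ) * b - a - b := by
    push_cast [Nat.sub_sub]
    omega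
  obtain ⟨x, y, hx0, hxb, hrep⟩ := canon a b hb0 hab (n : ℤ)
  have hrep2 : ((a * b - a - b - n : ℕ) : ℤ) = ((b : ℤ) - 1 - x) * a + (-1 - y) * b := by
    have : ((a * b - a - b - n : ℕ) : ℤ) = ((a * b - a - b : ℕ) : ℤ) - n := by
      push_cast [Nat.cast_sub hn]
      ring
    rw [this, hNcast, hrep]
    ring
  rw [rep_iff a b ha0 hb0 hab n hx0 hxb hrep,
    rep_iff a b ha0 hb0 hab _ (by omega : (0:ℤ) ≤ (b:ℤ) - 1 - x) (by omega) hrep2]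
  omega

theorem stmt_0 (a b : ℕ) (ha : 0 < a) (hb : 0 < b) (hab : Nat.Coprime a b) :
    {n : ℕ | n < a * b - a - b ∧ ∃ α β : ℕ, n = α * a + β * b}.ncard
      = (a - 1) * (b - 1) / 2 := by
  classical
  rcases le_or_gt a 1 with ha1 | ha1
  · have : a = 1 := by omega
    subst this
    have hN : 1 * b - 1 - b = 0 := by omega
    rw [hN]
    have he : {n : ℕ | n < 0 ∧ ∃ α β : ℕ, n = α * 1 + β * b} = ∅ := by
      ext n; simp
    rw [he, Set.ncard_empty]
    omega
  rcases le_or_gt b 1 with hb1 | hb1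
  · have : b = 1 := by omega
    subst this
    have hN : a * 1 - a - 1 = 0 := by omega
    rw [hN]
    convert Set.ncard_empty ℕ using 2
    · ext n; simp
    · omega
  -- main case
  set N := a * b - a - b with hN
  have hmn : a + b ≤ a * b := Nat.add_le_mul ha1 hb1
  have hP : ∀ n, Decidable (∃ α β : ℕ, n = α * a + β * b) := fun n => Classical.dec _
  have hset : {n : ℕ | n < N ∧ ∃ α β : ℕ, n = α * a + β * b} =
      ↑((Finset.range (N + 1)).filter (fun n => (∃ α β : ℕ, n = α * a + β * b))) := by
    ext n
    simp only [Set.mem_setOf_eq, Finset.coe_filter, Finset.mem_range]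
    constructor
    · rintro ⟨h1, h2⟩; exact ⟨by omega, h2⟩
    · rintro ⟨h1, h2⟩
      refine ⟨?_, h2⟩
      rcases Nat.lt_or_ge n N with h | h
      · exact h
      · exfalso
        have hnN : n = N := by omega
        subst hnN
        have := (frobeniusNumber_pair hab ha1 hb1).1
        rw [Set.mem_setOf_eq, AddSubmonoid.mem_closure_pair] at this
        obtain ⟨α, β, hαβ⟩ := h2
        exact this ⟨α, β, by simp [smul_eq_mul]; omega⟩
  rw [hset, Set.ncard_coe_finset]
  set S := (Finset.range (N + 1)).filter (fun n => (∃ α β : ℕ, n = α * a + β * b)) with hS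
  set T := (Finset.range (N + 1)).filter (fun n => ¬ (∃ α β : ℕ, n = α * a + β * b)) with hT
  have hcard : S.card + T.card = N + 1 := by
    rw [hS, hT, Finset.card_filter_add_card_filter_not, Finset.card_range]
  have hbij : S.card = T.card := by
    apply Finset.card_bij' (fun n _ => N - n) (fun n _ => N - n)
    · intro n hn
      simp only [hS, Finset.mem_filter, Finset.mem_range] at hn
      simp only [hT, Finset.mem_filter, Finset.mem_range]
      refine ⟨by omega, ?_⟩
      exact (sym a b ha1 hb1 hab (by omega)).mp hn.2
    · intro n hn
      simp only [hT, Finset.mem_filter, Finset.mem_range] at hn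
      simp only [hS, Finset.mem_filter, Finset.mem_range]
      have h2 := (sym a b ha1 hb1 hab (show N - n ≤ N by omega)).mpr
      rw [show N - (N - n) = n by omega] at h2
      exact ⟨by omega, h2 hn.2⟩
    · intro n hn
      simp only [hS, Finset.mem_filter, Finset.mem_range] at hn
      omega
    · intro n hn
      simp only [hT, Finset.mem_filter, Finset.mem_range] at hn
      omega
  have hNval : N + 1 = (a - 1) * (b - 1) := by
    have h1 : 1 ≤ a := ha
    have h2 : 1 ≤ b := hb
    zify [h1, h2, hmn, show a ≤ a * b by nlinarith, show b ≤ a * b - a by omega, hN]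
    push_cast
    ring
  omega
end

section
/- Let a, b be coprime positive integers with a, b ≥ 2, and let N = (a-1)(b-1)/2. Exactly half of the 2N pairs (α,β) ∈ ℤ≥0² with α ≤ b-2, β ≤ a-2 satisfy αa + βb ≤ 2N - 2. -/
theorem stmt_4 (a b : ℕ) (ha : 2 ≤ a) (hb : 2 ≤ b) (hab : Nat.Coprime a b)
    (N : ℕ) (hN : N = (a - 1) * (b - 1) / 2) :
    ((Finset.range (b - 1) ×ˢ Finset.range (a - 1)).filter
        (fun p => p.1 * a + p.2 * b ≤ 2 * N - 2)).card = N := by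
  -- the product (a-1)*(b-1) is even
  have heven : 2 ∣ ((a - 1) * (b - 1)) := by
    rcases Nat.even_or_odd a with h | h
    · have hbo : Odd b := by
        rcases Nat.even_or_odd b with h2 | h2
        · exfalso
          have h2d : 2 ∣ Nat.gcd a b := Nat.dvd_gcd h.two_dvd h2.two_dvd
          rw [hab] at h2d; omega
        · exact h2
      have : Even (b - 1) := Nat.Odd.sub_odd hbo odd_one
      exact (this.mul_left _).two_dvd
    · have : Even (a - 1) := Nat.Odd.sub_odd h odd_one
      exact (this.mul_right _).two_dvd
  have h2N : 2 * N = (a - 1) * (b - 1) := by rw [hN]; exact Nat.mul_div_cancel' heven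
  obtain ⟨a', rfl⟩ : ∃ a', a = a' + 2 := ⟨a - 2, by omega⟩
  obtain ⟨b', rfl⟩ : ∃ b', b = b' + 2 := ⟨b - 2, by omega⟩
  have er1 : a' + 2 - 1 = a' + 1 := rfl
  have er2 : b' + 2 - 1 = b' + 1 := rfl
  have er3 : a' + 2 - 2 = a' := rfl
  have er4 : b' + 2 - 2 = b' := rfl
  have hid : (a' + 2 - 1) * (b' + 2 - 1) + (a' + 2) + (b' + 2) = (a' + 2) * (b' + 2) + 1 := by
    rw [er1, er2]; ring
  have hAB : 2 * N + (a' + 2) + (b' + 2) = (a' + 2) * (b' + 2) + 1 := by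
    rw [h2N]; exact hid
  -- no pair attains the middle value
  have hne : ∀ α β : ℕ, α < b' + 2 - 1 → β < a' + 2 - 1 →
      α * (a' + 2) + β * (b' + 2) + (a' + 2) + (b' + 2) ≠ (a' + 2) * (b' + 2) := by
    intro α β hα hβ h
    have h1 : (α + 1) * (a' + 2) + (β + 1) * (b' + 2) = (a' + 2) * (b' + 2) := by
      ring_nf; ring_nf at h; linarith
    have hsub : (β + 1) * (b' + 2) = (a' + 2) * (b' + 2) - (α + 1) * (a' + 2) := by
      omega
    have hdvd : (a' + 2) ∣ (β + 1) * (b' + 2) := by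
      rw [hsub]
      exact Nat.dvd_sub (dvd_mul_right _ _) (dvd_mul_left _ _)
    have hd2 : (a' + 2) ∣ (β + 1) := hab.dvd_of_dvd_mul_right hdvd
    have := Nat.le_of_dvd (by omega) hd2
    omega
  -- total of a pair and its complement
  have hT : (b' + 2 - 2) * (a' + 2) + (a' + 2 - 2) * (b' + 2) + 2 = 2 * (2 * N) := by
    rw [h2N, er1, er2, er3, er4]; ring
  -- card of filter = card of co-filter via involution
  set S := Finset.range (b' + 2 - 1) ×ˢ Finset.range (a' + 2 - 1) with hS
  set P : ℕ × ℕ → Prop := fun p => p.1 * (a' + 2) + p.2 * (b' + 2) ≤ 2 * N - 2 with hP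
  have hmem : ∀ p : ℕ × ℕ, p ∈ S ↔ p.1 < b' + 2 - 1 ∧ p.2 < a' + 2 - 1 := by
    intro p; simp [hS, Finset.mem_product]
  have hsum : ∀ α β : ℕ, α < b' + 2 - 1 → β < a' + 2 - 1 →
      (α * (a' + 2) + β * (b' + 2)) +
        ((b' + 2 - 2 - α) * (a' + 2) + (a' + 2 - 2 - β) * (b' + 2)) = (b' + 2 - 2) * (a' + 2) + (a' + 2 - 2) * (b' + 2) := by
    intro α β hα hβ
    have e1 : (b' + 2 - 2 - α) + α = b' + 2 - 2 := by omega
    have e2 : (a' + 2 - 2 - β) + β = a' + 2 - 2 := by omega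
    calc (α * (a' + 2) + β * (b' + 2)) +
          ((b' + 2 - 2 - α) * (a' + 2) + (a' + 2 - 2 - β) * (b' + 2))
        = ((b' + 2 - 2 - α) + α) * (a' + 2) + ((a' + 2 - 2 - β) + β) * (b' + 2) := by ring
      _ = (b' + 2 - 2) * (a' + 2) + (a' + 2 - 2) * (b' + 2) := by rw [e1, e2]
  have harith : ∀ x y t AB : ℕ, x + y = t → t + 2 = 2 * (2 * N) →
      2 * N + (a' + 2) + (b' + 2) = AB + 1 →
      x + (a' + 2) + (b' + 2) ≠ AB → y + (a' + 2) + (b' + 2) ≠ AB →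
      (x ≤ 2 * N - 2 ↔ ¬ y ≤ 2 * N - 2) := by
    intro x y t AB h1 h2 h3 h4 h5; omega
  have hflip : ∀ p ∈ S, (P p ↔ ¬ P ((b' + 2 - 2 - p.1, a' + 2 - 2 - p.2) : ℕ × ℕ)) := by
    intro p hp
    rw [hmem] at hp
    exact harith _ _ _ _ (hsum p.1 p.2 hp.1 hp.2) hT hAB
      (hne p.1 p.2 hp.1 hp.2)
      (hne _ _ (by omega) (by omega))
  have hmemflip : ∀ p ∈ S, ((b' + 2 - 2 - p.1, a' + 2 - 2 - p.2) : ℕ × ℕ) ∈ S := by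
    intro p hp; rw [hmem] at hp ⊢; constructor <;> simp <;> omega
  have hinv : ∀ p ∈ S, ((b' + 2 - 2 - (b' + 2 - 2 - p.1), a' + 2 - 2 - (a' + 2 - 2 - p.2)) : ℕ × ℕ) = p := by
    intro p hp; rw [hmem] at hp
    ext <;> simp <;> omega
  have hcards : (S.filter P).card = (S.filter (fun p => ¬ P p)).card := by
    apply Finset.card_bij' (fun p _ => ((b' + 2 - 2 - p.1, a' + 2 - 2 - p.2) : ℕ × ℕ))
      (fun p _ => ((b' + 2 - 2 - p.1, a' + 2 - 2 - p.2) : ℕ × ℕ))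
    · intro p hp
      rw [Finset.mem_filter] at hp ⊢
      exact ⟨hmemflip p hp.1, (hflip p hp.1).mp hp.2⟩
    · intro p hp
      rw [Finset.mem_filter] at hp ⊢
      refine ⟨hmemflip p hp.1, ?_⟩
      by_contra hq
      exact hp.2 ((hflip p hp.1).mpr hq)
    · intro p hp; exact hinv p (Finset.mem_filter.mp hp).1
    · intro p hp; exact hinv p (Finset.mem_filter.mp hp).1
  have htot := Finset.card_filter_add_card_filter_not (s := S) P
  have hScard : S.card = (b' + 2 - 1) * (a' + 2 - 1) := by
    simp [hS, Finset.card_product]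
  rw [hcards, hScard] at htot
  have h2N' : 2 * N = (b' + 2 - 1) * (a' + 2 - 1) := by rw [h2N]; ring
  suffices h : (S.filter P).card = N from h
  omega
end

section
/- Let x, y ∈ ℝ[t] with deg x = a and deg y = b, gcd(a,b) = 1, a, b ≥ 2. Suppose there are N = (a-1)(b-1)/2 pairs (sᵢ, tᵢ) with sᵢ ≠ tᵢ, x(sᵢ) = x(tᵢ), y(sᵢ) = y(tᵢ), and all 2N parameters t₁,...,t_N,s₁,...,s_N distinct. Given any real numbers v₁, ..., v_N, there exists a polynomial h in the span of {x^α y^β : αa + βb ≤ ab - a - b - 1} with h(tᵢ) = h(sᵢ) = vᵢ for all i. -/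
open Polynomial Finset

lemma aux_li {ι : Type*} (f : ι → Polynomial ℝ) (h0 : ∀ i, f i ≠ 0)
    (hd : Function.Injective fun i => (f i).natDegree) : LinearIndependent ℝ f := by
  classical
  rw [linearIndependent_iff']
  intro s
  induction s using Finset.strongInductionOn with
  | _ s ih =>
    intro g hs i hi
    have hne : s.Nonempty := ⟨i, hi⟩
    obtain ⟨i₀, hi₀, hmax⟩ := s.exists_max_image (fun i => (f i).natDegree) hne
    have hg0 : g i₀ = 0 := by
      have hc := congrArg (fun p => Polynomial.coeff p ((f i₀).natDegree)) hs
      simp only [Polynomial.finset_sum_coeff, Polynomial.coeff_smul, smul_eq_mul,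
        Polynomial.coeff_zero] at hc
      rw [Finset.sum_eq_single i₀] at hc
      · have hlc : (f i₀).coeff (f i₀).natDegree ≠ 0 := by
          rw [← Polynomial.leadingCoeff]
          exact Polynomial.leadingCoeff_ne_zero.mpr (h0 i₀)
        exact (mul_eq_zero.mp hc).resolve_right hlc
      · intro j hj hji
        have hlt : (f j).natDegree < (f i₀).natDegree :=
          lt_of_le_of_ne (hmax j hj) (fun h => hji (hd h))
        rw [Polynomial.coeff_eq_zero_of_natDegree_lt hlt, mul_zero]
      · intro h; exact absurd hi₀ h
    have hsum : ∑ j ∈ s.erase i₀, g j • f j = 0 := by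
      rw [← Finset.add_sum_erase s _ hi₀, hg0, zero_smul, zero_add] at hs
      exact hs
    rcases eq_or_ne i i₀ with rfl | hne'
    · exact hg0
    · exact ih (s.erase i₀) (Finset.erase_ssubset hi₀) g hsum i (Finset.mem_erase.mpr ⟨hne', hi⟩)

lemma aux_repr_aux (a b : ℕ) (ha : 2 ≤ a) (hb : 2 ≤ b) (hab : Nat.Coprime a b)
    (n m : ℕ) (hnm : n + m + a + b = a * b)
    (hn : ¬ ∃ c d : ℕ, c * a + d * b = n) : ∃ c d : ℕ, c * a + d * b = m := by
  haveI : NeZero b := ⟨by omega⟩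
  set α := ((n : ZMod b) * (a : ZMod b)⁻¹).val with hα
  have hαlt : α < b := ZMod.val_lt _
  have hunit : IsUnit (a : ZMod b) := (ZMod.isUnit_iff_coprime a b).mpr hab
  have hcast : ((α : ℕ) : ZMod b) = (n : ZMod b) * (a : ZMod b)⁻¹ :=
    ZMod.natCast_rightInverse _
  have hmod : ((α * a : ℕ) : ZMod b) = (n : ZMod b) := by
    push_cast
    rw [hcast, mul_assoc, ZMod.inv_mul_of_unit _ hunit, mul_one]
  have hMOD : α * a ≡ n [MOD b] := (ZMod.natCast_eq_natCast_iff _ _ _).mp hmod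
  rcases le_or_gt (α * a) n with hle | hlt
  · obtain ⟨γ, hγ⟩ := (Nat.modEq_iff_dvd' hle).mp hMOD
    rw [Nat.sub_eq_iff_eq_add hle] at hγ
    exact absurd ⟨α, γ, by rw [hγ]; ring⟩ hn
  · obtain ⟨k, hk⟩ := (Nat.modEq_iff_dvd' hlt.le).mp hMOD.symm
    have hk1 : 1 ≤ k := by
      rcases Nat.eq_zero_or_pos k with rfl | h
      · rw [mul_zero] at hk
        exact absurd (Nat.sub_eq_zero_iff_le.mp hk) (not_le.mpr hlt)
      · exact h
    rw [Nat.sub_eq_iff_eq_add hlt.le] at hk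
    refine ⟨b - 1 - α, k - 1, ?_⟩
    zify [show (1:ℕ) ≤ b by omega, show α ≤ b - 1 by omega, hk1]
    have hZ1 : (α : ℤ) * a = b * k + n := by exact_mod_cast hk
    have hZ2 : (n : ℤ) + m + a + b = a * b := by exact_mod_cast hnm
    linear_combination -hZ1 - hZ2

lemma aux_symm (a b : ℕ) (ha : 2 ≤ a) (hb : 2 ≤ b) (hab : Nat.Coprime a b)
    (n m : ℕ) (hnm : n + m + a + b = a * b) :
    (∃ c d : ℕ, c * a + d * b = n) ↔ ¬ ∃ c d : ℕ, c * a + d * b = m := by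
  constructor
  · rintro ⟨c, d, rfl⟩ ⟨c', d', rfl⟩
    have h1 : (c + c' + 1) * a + (d + d' + 1) * b = a * b := by
      have h := congrArg (Nat.cast : ℕ → ℤ) hnm
      push_cast at h
      have : ((c:ℤ) + c' + 1) * a + ((d:ℤ) + d' + 1) * b = a * b := by linear_combination h
      exact_mod_cast this
    have hdvd : a ∣ (d + d' + 1) * b :=
      (Nat.dvd_add_right (dvd_mul_left a _)).mp (by rw [h1]; exact dvd_mul_right a b)
    have hd1 : a ∣ d + d' + 1 := hab.dvd_of_dvd_mul_right hdvd
    have hge : a ≤ d + d' + 1 := Nat.le_of_dvd (by omega) hd1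
    have h2 : a * b ≤ (d + d' + 1) * b := Nat.mul_le_mul hge le_rfl
    have h3 : 0 < (c + c' + 1) * a := Nat.mul_pos (by omega) (by omega)
    linarith
  · intro hm
    by_contra hn
    exact hm (aux_repr_aux a b ha hb hab n m hnm hn)

lemma aux_unique (a b : ℕ) (hb : 2 ≤ b) (hab : Nat.Coprime a b)
    (c d c' d' : ℕ) (hc : c < b) (hc' : c' < b)
    (h : c * a + d * b = c' * a + d' * b) : c = c' ∧ d = d' := by
  haveI : NeZero b := ⟨by omega⟩
  have hunit : IsUnit (a : ZMod b) := (ZMod.isUnit_iff_coprime a b).mpr hab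
  have hz : ((c : ZMod b)) * a = ((c' : ZMod b)) * a := by
    have := congrArg (Nat.cast : ℕ → ZMod b) h
    push_cast at this
    simpa [ZMod.natCast_self] using this
  have hcc : (c : ZMod b) = (c' : ZMod b) := by
    have h2 := congrArg (· * (a : ZMod b)⁻¹) hz
    simpa [mul_assoc, ZMod.mul_inv_of_unit _ hunit] using h2
  have hc2 : c = c' := by
    have h3 := congrArg ZMod.val hcc
    rwa [ZMod.val_cast_of_lt hc, ZMod.val_cast_of_lt hc'] at h3
  subst hc2
  refine ⟨rfl, Nat.eq_of_mul_eq_mul_right (by omega) (Nat.add_left_cancel h)⟩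

lemma aux_lt (a b c d : ℕ) (ha : 2 ≤ a) (hb : 2 ≤ b)
    (h : c * a + d * b ≤ a * b - a - b - 1) : c < b ∧ d < a := by
  have hpos : 0 < a * b := Nat.mul_pos (by omega) (by omega)
  constructor
  · by_contra hc
    push_neg at hc
    have h1 : a * b ≤ c * a := by rw [mul_comm a b]; exact Nat.mul_le_mul hc le_rfl
    have h2 : c * a ≤ a * b - a - b - 1 := le_trans (Nat.le_add_right _ _) h
    generalize h4 : a * b = e at h1 h2 hpos
    generalize h5 : c * a = u at h1 h2
    omega
  · by_contra hc
    push_neg at hc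
    have h1 : a * b ≤ d * b := Nat.mul_le_mul hc le_rfl
    have h2 : d * b ≤ a * b - a - b - 1 := le_trans (Nat.le_add_left _ _) h
    generalize h4 : a * b = e at h1 h2 hpos
    generalize h5 : d * b = u at h1 h2
    omega

lemma aux_arith (a b N : ℕ) (ha : 2 ≤ a) (hb : 2 ≤ b) (hab : Nat.Coprime a b)
    (hN : N = (a - 1) * (b - 1) / 2) :
    2 * N = a * b - a - b + 1 ∧ 1 ≤ N ∧ a + b ≤ a * b := by
  have h2 : ¬ (2 ∣ a ∧ 2 ∣ b) := by
    rintro ⟨h2a, h2b⟩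
    have := Nat.dvd_gcd h2a h2b
    rw [hab.gcd_eq_one] at this
    omega
  have hdvd : 2 ∣ (a - 1) * (b - 1) := by
    by_cases h2a : 2 ∣ a
    · have h2b : ¬ 2 ∣ b := fun hh => h2 ⟨h2a, hh⟩
      exact Dvd.dvd.mul_left (by omega : 2 ∣ b - 1) _
    · exact Dvd.dvd.mul_right (by omega : 2 ∣ a - 1) _
  have hprod : (a - 1) * (b - 1) + a + b = a * b + 1 := by
    zify [show (1:ℕ) ≤ a by omega, show (1:ℕ) ≤ b by omega]
    ring
  have hM1 : 1 ≤ (a - 1) * (b - 1) := Nat.mul_pos (by omega) (by omega)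
  generalize hu : (a - 1) * (b - 1) = M at hN hdvd hprod hM1
  generalize hv : a * b = C at hprod ⊢
  omega

lemma aux_card (a b N : ℕ) (ha : 2 ≤ a) (hb : 2 ≤ b) (hab : Nat.Coprime a b)
    (hN : N = (a - 1) * (b - 1) / 2) :
    ((Finset.range b ×ˢ Finset.range a).filter
      (fun p : ℕ × ℕ => p.1 * a + p.2 * b ≤ a * b - a - b - 1)).card = N := by
  classical
  obtain ⟨h2N, hN1, hba⟩ := aux_arith a b N ha hb hab hN
  obtain ⟨F, hF⟩ : ∃ F, a * b - a - b = F := ⟨_, rfl⟩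
  rw [hF] at h2N ⊢
  have hFab : F + a + b = a * b := by
    rw [← hF, Nat.sub_sub, add_assoc]
    exact Nat.sub_add_cancel hba
  have hF1 : 1 ≤ F := by omega
  have hPF : ¬ ∃ c d : ℕ, c * a + d * b = F := fun hPf =>
    ((aux_symm a b ha hb hab 0 F (by omega)).mp ⟨0, 0, by simp⟩) hPf
  have hsplit := Finset.card_filter_add_card_filter_not
    (s := Finset.range (F + 1)) (p := fun n => ∃ c d : ℕ, c * a + d * b = n)
  rw [Finset.card_range] at hsplit
  have hbij : ((Finset.range (F + 1)).filter (fun n => ∃ c d : ℕ, c * a + d * b = n)).card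
      = ((Finset.range (F + 1)).filter (fun n => ¬ ∃ c d : ℕ, c * a + d * b = n)).card := by
    apply Finset.card_bij (fun n _ => F - n)
    · intro n hn
      simp only [Finset.mem_filter, Finset.mem_range] at hn ⊢
      refine ⟨by omega, ?_⟩
      exact (aux_symm a b ha hb hab n (F - n) (by omega)).mp hn.2
    · intro n₁ h₁ n₂ h₂ he
      simp only [Finset.mem_filter, Finset.mem_range] at h₁ h₂
      omega
    · intro m hm
      simp only [Finset.mem_filter, Finset.mem_range] at hm
      refine ⟨F - m, ?_, by omega⟩
      simp only [Finset.mem_filter, Finset.mem_range]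
      refine ⟨by omega, ?_⟩
      by_contra hc
      exact hm.2 ((aux_symm a b ha hb hab m (F - m) (by omega)).mpr hc)
  have hcardA : ((Finset.range (F + 1)).filter
      (fun n => ∃ c d : ℕ, c * a + d * b = n)).card = N := by omega
  rw [← hcardA]
  apply Finset.card_bij (fun p _ => p.1 * a + p.2 * b)
  · intro p hp
    simp only [Finset.mem_filter, Finset.mem_product, Finset.mem_range] at hp ⊢
    exact ⟨by omega, p.1, p.2, rfl⟩
  · intro p₁ h₁ p₂ h₂ he
    simp only [Finset.mem_filter, Finset.mem_product, Finset.mem_range] at h₁ h₂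
    obtain ⟨hc, hd⟩ := aux_unique a b hb hab p₁.1 p₁.2 p₂.1 p₂.2 h₁.1.1 h₂.1.1 he
    exact Prod.ext hc hd
  · intro n hn
    simp only [Finset.mem_filter, Finset.mem_range] at hn
    obtain ⟨hlt, c, d, rfl⟩ := hn
    have hne : c * a + d * b ≠ F := fun h => hPF ⟨c, d, h⟩
    have hle : c * a + d * b ≤ a * b - a - b - 1 := by rw [hF]; omega
    obtain ⟨hcb, hda⟩ := aux_lt a b c d ha hb hle
    refine ⟨(c, d), ?_, rfl⟩
    simp only [Finset.mem_filter, Finset.mem_product, Finset.mem_range]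
    exact ⟨⟨hcb, hda⟩, by omega⟩

theorem stmt_9 (a b : ℕ) (ha : 2 ≤ a) (hb : 2 ≤ b) (hab : Nat.Coprime a b)
    (x y : Polynomial ℝ) (hx : x.natDegree = a) (hy : y.natDegree = b)
    (N : ℕ) (hN : N = (a - 1) * (b - 1) / 2)
    (s t : Fin N → ℝ)
    (hst : ∀ i, s i ≠ t i)
    (hxeq : ∀ i, x.eval (s i) = x.eval (t i))
    (hyeq : ∀ i, y.eval (s i) = y.eval (t i))
    (hdistinct : Function.Injective (Sum.elim t s : Fin N ⊕ Fin N → ℝ)) :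
    ∀ v : Fin N → ℝ, ∃ h ∈ Submodule.span ℝ
      ((fun p : ℕ × ℕ => x ^ p.1 * y ^ p.2) ''
        {p : ℕ × ℕ | p.1 * a + p.2 * b ≤ a * b - a - b - 1}),
      ∀ i : Fin N, h.eval (t i) = v i ∧ h.eval (s i) = v i := by
  classical
  intro v
  obtain ⟨h2N, hN1, hba⟩ := aux_arith a b N ha hb hab hN
  have hx0 : x ≠ 0 := fun h => by simp [h] at hx; omega
  have hy0 : y ≠ 0 := fun h => by simp [h] at hy; omega
  set f : ℕ × ℕ → Polynomial ℝ := fun p => x ^ p.1 * y ^ p.2 with hf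
  have hfd : ∀ p : ℕ × ℕ, (f p).natDegree = p.1 * a + p.2 * b := by
    intro p
    simp only [hf]
    rw [Polynomial.natDegree_mul (pow_ne_zero _ hx0) (pow_ne_zero _ hy0),
      Polynomial.natDegree_pow, Polynomial.natDegree_pow, hx, hy]
  have hf0 : ∀ p : ℕ × ℕ, f p ≠ 0 := fun p =>
    mul_ne_zero (pow_ne_zero _ hx0) (pow_ne_zero _ hy0)
  set Sf : Finset (ℕ × ℕ) := (Finset.range b ×ˢ Finset.range a).filter
      (fun p => p.1 * a + p.2 * b ≤ a * b - a - b - 1) with hSf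
  have hSmem : ∀ p : ℕ × ℕ, p ∈ Sf ↔ p.1 * a + p.2 * b ≤ a * b - a - b - 1 := by
    intro p
    simp only [hSf, Finset.mem_filter, Finset.mem_product, Finset.mem_range]
    constructor
    · exact fun h => h.2
    · intro h
      obtain ⟨h1, h2⟩ := aux_lt a b p.1 p.2 ha hb h
      exact ⟨⟨h1, h2⟩, h⟩
  have hSset : {p : ℕ × ℕ | p.1 * a + p.2 * b ≤ a * b - a - b - 1} = (Sf : Set (ℕ × ℕ)) := by
    ext p
    rw [Set.mem_setOf_eq, Finset.mem_coe, hSmem]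
  rw [hSset, ← Finset.coe_image]
  set V := Submodule.span ℝ ((Sf.image f : Finset (Polynomial ℝ)) : Set (Polynomial ℝ)) with hV
  -- injectivity of f on Sf via natDegree
  have hSinj : ∀ p ∈ Sf, ∀ q ∈ Sf, (f p).natDegree = (f q).natDegree → p = q := by
    intro p hp q hq hpq
    rw [hfd, hfd] at hpq
    have hpb : p.1 < b := by
      have := (hSmem p).mp hp
      exact (aux_lt a b p.1 p.2 ha hb this).1
    have hqb : q.1 < b := by
      have := (hSmem q).mp hq
      exact (aux_lt a b q.1 q.2 ha hb this).1
    obtain ⟨h1, h2⟩ := aux_unique a b hb hab p.1 p.2 q.1 q.2 hpb hqb hpq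
    exact Prod.ext h1 h2
  have hLI : LinearIndependent ℝ ((↑) : ↥(Sf.image f) → Polynomial ℝ) := by
    apply aux_li
    · rintro ⟨z, hz⟩
      obtain ⟨p, hp, rfl⟩ := Finset.mem_image.mp hz
      exact hf0 p
    · rintro ⟨z, hz⟩ ⟨w, hw⟩ hzw
      obtain ⟨p, hp, rfl⟩ := Finset.mem_image.mp hz
      obtain ⟨q, hq, rfl⟩ := Finset.mem_image.mp hw
      simp only at hzw
      exact Subtype.ext (congrArg f (hSinj p hp q hq hzw))
  have hcard : (Sf.image f).card = N := by
    rw [Finset.card_image_of_injOn, hSf]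
    · exact aux_card a b N ha hb hab hN
    · intro p hp q hq hpq
      exact hSinj p hp q hq (congrArg Polynomial.natDegree hpq)
  have hrankV : Module.finrank ℝ V = N := by
    rw [hV, finrank_span_finset_eq_card hLI, hcard]
  haveI hfdV : FiniteDimensional ℝ V := FiniteDimensional.span_of_finite ℝ (Finset.finite_toSet _)
  -- degree bound on members of V
  have hdegV : ∀ p ∈ V, p.natDegree ≤ a * b - a - b - 1 := by
    have hle : V ≤ Polynomial.degreeLE ℝ ((a * b - a - b - 1 : ℕ) : WithBot ℕ) := by
      rw [hV, Submodule.span_le]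
      intro z hz
      obtain ⟨p, hp, rfl⟩ := Finset.mem_image.mp (Finset.mem_coe.mp hz)
      rw [SetLike.mem_coe, Polynomial.mem_degreeLE]
      exact Polynomial.degree_le_of_natDegree_le (by rw [hfd]; exact (hSmem p).mp hp)
    intro p hp
    exact Polynomial.natDegree_le_of_degree_le (Polynomial.mem_degreeLE.mp (hle hp))
  -- evaluations at s i and t i agree on V
  have hsame : ∀ i, ∀ p ∈ V, p.eval (s i) = p.eval (t i) := by
    intro i
    have hker : V ≤ LinearMap.ker (Polynomial.leval (s i) - Polynomial.leval (t i)) := by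
      rw [hV, Submodule.span_le]
      intro z hz
      obtain ⟨p, hp, rfl⟩ := Finset.mem_image.mp (Finset.mem_coe.mp hz)
      simp only [SetLike.mem_coe, LinearMap.mem_ker, LinearMap.sub_apply,
        Polynomial.leval_apply, hf, Polynomial.eval_mul, Polynomial.eval_pow,
        hxeq i, hyeq i, sub_self]
    intro p hp
    have := hker hp
    rw [LinearMap.mem_ker, LinearMap.sub_apply] at this
    simp only [Polynomial.leval_apply] at this
    linarith [sub_eq_zero.mp this]
  -- the evaluation linear map
  set L : V →ₗ[ℝ] (Fin N → ℝ) :=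
    LinearMap.pi (fun i => (Polynomial.leval (t i)).comp V.subtype) with hL
  have hLinj : Function.Injective L := by
    refine (injective_iff_map_eq_zero L).mpr ?_
    rintro ⟨p, hp⟩ hLz
    have hz : ∀ i, p.eval (t i) = 0 := by
      intro i
      have := congrFun hLz i
      simpa [hL, LinearMap.pi_apply, Polynomial.leval_apply] using this
    have hz' : ∀ i, p.eval (s i) = 0 := fun i => by rw [hsame i p hp]; exact hz i
    have hp0 : p = 0 := by
      apply Polynomial.eq_zero_of_natDegree_lt_card_of_eval_eq_zero p hdistinct
      · rintro (i | i)
        · simpa using hz i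
        · simpa using hz' i
      · have hdeg := hdegV p hp
        simp only [Fintype.card_sum, Fintype.card_fin]
        obtain ⟨F, hF⟩ : ∃ F, a * b - a - b = F := ⟨_, rfl⟩
        rw [hF] at hdeg h2N
        omega
    exact Subtype.ext hp0
  have hLsurj : Function.Surjective L := by
    have hrk : Module.finrank ℝ V = Module.finrank ℝ (Fin N → ℝ) := by
      rw [hrankV, Module.finrank_fintype_fun_eq_card, Fintype.card_fin]
    exact (LinearMap.injective_iff_surjective_of_finrank_eq_finrank hrk).mp hLinj
  obtain ⟨z, hz⟩ := hLsurj v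
  refine ⟨z.1, z.2, fun i => ?_⟩
  have hti : (z : Polynomial ℝ).eval (t i) = v i := by
    have := congrFun hz i
    simpa [hL, LinearMap.pi_apply, Polynomial.leval_apply] using this
  exact ⟨hti, by rw [hsame i z.1 z.2]; exact hti⟩
end
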